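/- The finite quadratic form (A,q) = u(2)^2 ⊕ ⟨−1/4⟩ (the discriminant form of the lattice T = U(2)^2 ⊕ ⟨−4⟩) has exactly 10 cyclic subgroups of order 4 generated by an element x with q(x) = −1/4, exactly 6 cyclic subgroups of order 4 generated by an element x with q(x) = 3/4, and exactly 15 subgroups isomorphic to Z/2 × Z/2 containing the element 2g (where g generates the ⟨−1/4⟩ summand); in total 31 such subgroups. -/
import Mathlib


/-- Underlying group of the finite quadratic form `A = u(2)^2 ⊕ ⟨-1/4⟩`,
the discriminant form of `T = U(2)^2 ⊕ ⟨-4⟩`. -/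
abbrev AT : Type := (Fin 2 → ZMod 2 × ZMod 2) × ZMod 4

/-- The quadratic form `u(2)^2 ⊕ ⟨-1/4⟩` with values in `ℚ/2ℤ`:
`q(e)=q(f)=0`, `b(e,f)=1/2` on each `u(2)`, and `q(g) = -1/4` on the `ℤ/4` summand. -/
def qT (x : AT) : AddCircle (2 : ℚ) :=
  (((∑ i, ((x.1 i).1.val : ℚ) * ((x.1 i).2.val : ℚ)) - ((x.2.val : ℚ))^2 / 4 : ℚ) :
    AddCircle (2 : ℚ))

/-- The element `2g`, where `g` generates the `⟨-1/4⟩` summand. -/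
def twoG : AT := (0, 2)

abbrev V : Type := Fin 2 → ZMod 2 × ZMod 2

lemma L1 (a b : ℤ) : ((a/4 : ℚ) : AddCircle (2:ℚ)) = ((b/4 : ℚ) : AddCircle (2:ℚ)) ↔
    ((a : ZMod 8) = (b : ZMod 8)) := by
  rw [show ((a/4 : ℚ) : AddCircle (2:ℚ)) = QuotientAddGroup.mk (a/4 : ℚ) from rfl,
    show ((b/4 : ℚ) : AddCircle (2:ℚ)) = QuotientAddGroup.mk (b/4 : ℚ) from rfl,
    QuotientAddGroup.eq, AddSubgroup.mem_zmultiples_iff,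
    ZMod.intCast_eq_intCast_iff]
  constructor
  · rintro ⟨k, hk⟩
    rw [zsmul_eq_mul] at hk
    have h2 : (b : ℚ) - a = k * 8 := by linarith
    have h3 : b - a = k * 8 := by exact_mod_cast h2
    exact Int.modEq_iff_dvd.mpr ⟨k, by omega⟩
  · intro h
    obtain ⟨k, hk⟩ := Int.modEq_iff_dvd.mp h
    refine ⟨k, ?_⟩
    have : (b:ℚ) - a = 8 * k := by exact_mod_cast hk
    rw [zsmul_eq_mul]
    linarith

def Q8 (x : AT) : ZMod 8 :=
  4 * (∑ i, ((x.1 i).1.val : ZMod 8) * ((x.1 i).2.val : ZMod 8)) - ((x.2.val : ZMod 8))^2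

def Qint (x : AT) : ℤ :=
  4 * (∑ i, ((x.1 i).1.val : ℤ) * ((x.1 i).2.val : ℤ)) - ((x.2.val : ℤ))^2

lemma qT_eq (x : AT) (n : ℤ) :
    qT x = ((n/4 : ℚ) : AddCircle (2:ℚ)) ↔ Q8 x = (n : ZMod 8) := by
  have hq : qT x = (((Qint x : ℚ)/4 : ℚ) : AddCircle (2:ℚ)) := by
    unfold qT Qint
    congr 1
    push_cast
    ring
  have hQ : ((Qint x : ZMod 8)) = Q8 x := by
    unfold Qint Q8
    push_cast
    ring
  rw [hq, L1, hQ]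

lemma exp4 : ∀ x : AT, (4:ℕ) • x = 0 := by decide

lemma ord_iff (x : AT) : addOrderOf x = 4 ↔ ¬ (2:ℕ) • x = 0 := by
  have h4 : addOrderOf x ∣ 4 := addOrderOf_dvd_of_nsmul_eq_zero (exp4 x)
  constructor
  · intro h h2
    have := addOrderOf_dvd_of_nsmul_eq_zero h2
    rw [h] at this
    norm_num at this
  · intro h2
    have hne2 : ¬ addOrderOf x ∣ 2 := fun hd => h2 (addOrderOf_dvd_iff_nsmul_eq_zero.mp hd)
    generalize hgen : addOrderOf x = N at h4 hne2 ⊢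
    have hmem : N ∈ Nat.divisors 4 := Nat.mem_divisors.mpr ⟨h4, by norm_num⟩
    fin_cases hmem <;> first | rfl | (exact absurd (by norm_num) hne2)

lemma closure_neg_le (x : AT) :
    AddSubgroup.closure {-x} ≤ AddSubgroup.closure {x} := by
  rw [AddSubgroup.closure_le]
  rintro y rfl
  exact neg_mem (AddSubgroup.subset_closure rfl)

lemma closure_neg (x : AT) :
    AddSubgroup.closure {-x} = AddSubgroup.closure {x} := by
  refine le_antisymm (closure_neg_le x) ?_
  have := closure_neg_le (-x)
  rwa [neg_neg] at this

lemma Q8_neg : ∀ x : AT, Q8 (-x) = Q8 x := by decide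

lemma two_smul_cases : ∀ x : AT, (2:ℕ) • x = 0 ∨ x.2 = 1 ∨ x.2 = 3 := by decide

lemma ord4_of_snd_one : ∀ x : AT, x.2 = 1 → ¬ (2:ℕ) • x = 0 := by decide

lemma count_gen (r : ℚ) (n : ℤ)
    (hr : ((r : ℚ) : AddCircle (2:ℚ)) = ((n/4 : ℚ) : AddCircle (2:ℚ))) (m : ℕ)
    (hm : Fintype.card {x : AT // x.2 = 1 ∧ Q8 x = (n : ZMod 8)} = m) :
    Nat.card {H : AddSubgroup AT // ∃ x : AT, H = AddSubgroup.closure {x} ∧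
      addOrderOf x = 4 ∧ qT x = ((r : ℚ) : AddCircle (2 : ℚ))} = m := by
  rw [← hm, ← Nat.card_eq_fintype_card]
  refine (Nat.card_eq_of_bijective
    (fun x => ⟨AddSubgroup.closure {x.1}, x.1, rfl,
      (ord_iff x.1).mpr (ord4_of_snd_one x.1 x.2.1),
      by rw [hr]; exact (qT_eq x.1 n).mpr x.2.2⟩) ⟨?_, ?_⟩).symm
  · rintro ⟨x, hx1, hxq⟩ ⟨y, hy1, hyq⟩ h
    simp only [Subtype.mk.injEq] at h
    have hy : (y : AT) ∈ AddSubgroup.closure {(x : AT)} := by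
      rw [h]; exact AddSubgroup.subset_closure rfl
    obtain ⟨k, hk⟩ := AddSubgroup.mem_closure_singleton.mp hy
    have h2 : ((k : ℤ) : ZMod 4) = ((1 : ℤ) : ZMod 4) := by
      have hsnd : (y : AT).2 = k • (x : AT).2 := by rw [← hk]; rfl
      rw [hy1, hx1, zsmul_eq_mul, mul_one] at hsnd
      rw [← hsnd]
      norm_num
    obtain ⟨c, hc⟩ := Int.modEq_iff_dvd.mp ((ZMod.intCast_eq_intCast_iff _ _ _).mp h2)
    have hk4 : k = 1 + (-c) * 4 := by omega
    have hfix : k • (x : AT) = (x : AT) := by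
      rw [hk4, add_zsmul, one_zsmul, mul_zsmul]
      have h40 : (4 : ℤ) • (x : AT) = 0 := by
        rw [show ((4:ℤ) • (x : AT)) = ((4:ℕ) • (x : AT)) from by push_cast; rfl]
        exact exp4 _
      rw [h40, smul_zero, add_zero]
    apply Subtype.ext
    show x = y
    rw [← hk, hfix]
  · rintro ⟨H, x, rfl, hord, hq⟩
    have h2 : ¬ (2:ℕ) • x = 0 := (ord_iff x).mp hord
    have hQ : Q8 x = (n : ZMod 8) := (qT_eq x n).mp (hq.trans hr)
    rcases two_smul_cases x with h | h | h
    · exact absurd h h2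
    · exact ⟨⟨x, h, hQ⟩, rfl⟩
    · refine ⟨⟨-x, ?_, by rw [Q8_neg]; exact hQ⟩, ?_⟩
      · show -x.2 = 1
        rw [h]; decide
      · simp only [Subtype.mk.injEq]
        rw [closure_neg]

/-! ### Klein four subgroups -/

def Kfin (v : V) : Finset AT := {0, twoG, (v,0), (v,2)}

def χ (x : AT) : ZMod 2 × ZMod 2 := (if x.1 = 0 then 0 else 1, if x.2 = 0 then 0 else 1)

lemma or4 (v : V) (x : AT) :
    x ∈ Kfin v ↔ x = 0 ∨ x = twoG ∨ x = (v,0) ∨ x = (v,2) := by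
  simp [Kfin]

set_option maxRecDepth 100000 in
lemma sums1 : ∀ v : V,
    twoG + twoG = (0:AT) ∧ twoG + ((v,0):AT) = (v,2) ∧ twoG + ((v,2):AT) = (v,0) ∧
    ((v,0):AT) + twoG = (v,2) ∧ ((v,0):AT) + (v,0) = 0 ∧ ((v,0):AT) + (v,2) = twoG := by decide

set_option maxRecDepth 100000 in
lemma sums2 : ∀ v : V,
    ((v,2):AT) + twoG = (v,0) ∧ ((v,2):AT) + (v,0) = twoG ∧ ((v,2):AT) + (v,2) = 0 ∧
    -twoG = twoG ∧ -((v,0):AT) = (v,0) ∧ -((v,2):AT) = (v,2) := by decide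

lemma sums (v : V) :
    twoG + twoG = (0:AT) ∧ twoG + ((v,0):AT) = (v,2) ∧ twoG + ((v,2):AT) = (v,0) ∧
    ((v,0):AT) + twoG = (v,2) ∧ ((v,0):AT) + (v,0) = 0 ∧ ((v,0):AT) + (v,2) = twoG ∧
    ((v,2):AT) + twoG = (v,0) ∧ ((v,2):AT) + (v,0) = twoG ∧ ((v,2):AT) + (v,2) = 0 ∧
    -twoG = twoG ∧ -((v,0):AT) = (v,0) ∧ -((v,2):AT) = (v,2) := by
  obtain ⟨a1, a2, a3, a4, a5, a6⟩ := sums1 v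
  obtain ⟨b1, b2, b3, b4, b5, b6⟩ := sums2 v
  exact ⟨a1, a2, a3, a4, a5, a6, b1, b2, b3, b4, b5, b6⟩

lemma chi_vals : ∀ v : V, v ≠ 0 →
    χ 0 = (0,0) ∧ χ twoG = (0,1) ∧ χ (v,0) = (1,0) ∧ χ (v,2) = (1,1) := by decide

lemma Kcard : ∀ v : V, v ≠ 0 → (Kfin v).card = 4 := by decide

def Kgrp (v : V) : AddSubgroup AT where
  carrier := ↑(Kfin v)
  zero_mem' := by rw [Finset.mem_coe, or4]; tauto
  add_mem' := by
    intro a b ha hb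
    rw [Finset.mem_coe, or4] at ha hb ⊢
    obtain ⟨s1, s2, s3, s4, s5, s6, s7, s8, s9, -⟩ := sums v
    rcases ha with rfl|rfl|rfl|rfl <;> rcases hb with rfl|rfl|rfl|rfl <;>
      simp only [zero_add, add_zero, s1, s2, s3, s4, s5, s6, s7, s8, s9] <;> tauto
  neg_mem' := by
    intro a ha
    rw [Finset.mem_coe, or4] at ha ⊢
    obtain ⟨-, -, -, -, -, -, -, -, -, n1, n2, n3⟩ := sums v
    rcases ha with rfl|rfl|rfl|rfl <;> simp only [neg_zero, n1, n2, n3] <;> tauto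

lemma mem_Kgrp (v : V) (x : AT) :
    x ∈ Kgrp v ↔ x = 0 ∨ x = twoG ∨ x = (v,0) ∨ x = (v,2) := by
  rw [show (x ∈ Kgrp v) ↔ x ∈ Kfin v from Iff.rfl, or4]

lemma coe_Kgrp (v : V) : ((Kgrp v : AddSubgroup AT) : Set AT) = ↑(Kfin v) := rfl

lemma equivK (v : V) (hv : v ≠ 0) : Nonempty ((Kgrp v) ≃+ (ZMod 2 × ZMod 2)) := by
  obtain ⟨c0, c2, cv0, cv2⟩ := chi_vals v hv
  have hbij : Function.Bijective (fun x : Kgrp v => χ (x : AT)) := by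
    constructor
    · rintro ⟨x, hx⟩ ⟨y, hy⟩ h
      have hxy : χ x = χ y := h
      rw [mem_Kgrp] at hx hy
      apply Subtype.ext
      show x = y
      rcases hx with rfl|rfl|rfl|rfl <;> rcases hy with rfl|rfl|rfl|rfl <;>
        simp only [c0, c2, cv0, cv2] at hxy <;> first | rfl | (exact absurd hxy (by decide))
    · intro z
      have hz := (by decide : ∀ w : ZMod 2 × ZMod 2, w = (0,0) ∨ w = (0,1) ∨ w = (1,0) ∨ w = (1,1)) z
      rcases hz with rfl|rfl|rfl|rfl
      · exact ⟨⟨0, (mem_Kgrp v 0).mpr (by tauto)⟩, c0⟩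
      · exact ⟨⟨twoG, (mem_Kgrp v twoG).mpr (by tauto)⟩, c2⟩
      · exact ⟨⟨(v,0), (mem_Kgrp v _).mpr (by tauto)⟩, cv0⟩
      · exact ⟨⟨(v,2), (mem_Kgrp v _).mpr (by tauto)⟩, cv2⟩
  refine ⟨AddEquiv.mk' (Equiv.ofBijective _ hbij) ?_⟩
  rintro ⟨x, hx⟩ ⟨y, hy⟩
  show χ (x + y) = χ x + χ y
  rw [mem_Kgrp] at hx hy
  obtain ⟨s1, s2, s3, s4, s5, s6, s7, s8, s9, -⟩ := sums v
  rcases hx with rfl|rfl|rfl|rfl <;> rcases hy with rfl|rfl|rfl|rfl <;>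
    simp only [zero_add, add_zero, s1, s2, s3, s4, s5, s6, s7, s8, s9, c0, c2, cv0, cv2] <;>
    decide

lemma count_klein :
    Nat.card {H : AddSubgroup AT // Nonempty (H ≃+ (ZMod 2 × ZMod 2)) ∧ twoG ∈ H} = 15 := by
  have h15 : Fintype.card {v : V // v ≠ 0} = 15 := by decide
  rw [← h15, ← Nat.card_eq_fintype_card]
  refine (Nat.card_eq_of_bijective
    (fun v => ⟨Kgrp v.1, equivK v.1 v.2, (mem_Kgrp v.1 twoG).mpr (by tauto)⟩) ⟨?_, ?_⟩).symm
  · rintro ⟨v, hv⟩ ⟨w, hw⟩ h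
    simp only [Subtype.mk.injEq] at h
    have hm : ((v,0) : AT) ∈ Kgrp w := by rw [← h, mem_Kgrp]; tauto
    rw [mem_Kgrp] at hm
    apply Subtype.ext
    rcases hm with h'|h'|h'|h'
    · exact absurd (congrArg Prod.fst h') hv
    · exact absurd (congrArg Prod.snd h') (show ¬((0:ZMod 4) = 2) by decide)
    · exact congrArg Prod.fst h'
    · exact absurd (congrArg Prod.snd h') (show ¬((0:ZMod 4) = 2) by decide)
  · rintro ⟨H, ⟨e⟩, htwoG⟩
    have hcard : Nat.card H = 4 := by
      rw [Nat.card_congr e.toEquiv]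
      simp [Nat.card_eq_fintype_card]
    have twoTor : ∀ x, x ∈ H → x + x = 0 := by
      intro x hx
      have h0 : (⟨x, hx⟩ : H) + ⟨x, hx⟩ = 0 := by
        apply e.injective
        rw [e.map_add, e.map_zero]
        exact (by decide : ∀ z : ZMod 2 × ZMod 2, z + z = 0) _
      have := congrArg (Subtype.val) h0
      simpa using this
    have hsub : ¬ ((H : Set AT) ⊆ {0, twoG}) := by
      intro hs
      have h1 := Set.ncard_le_ncard hs (Set.toFinite _)
      have h2 : ({0, twoG} : Set AT).ncard ≤ 2 :=
        (Set.ncard_insert_le _ _).trans (by simp)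
      have hH4 : (H : Set AT).ncard = 4 := by
        rw [← Nat.card_coe_set_eq]; exact hcard
      omega
    obtain ⟨a, haH, hane⟩ := Set.not_subset.mp hsub
    simp only [Set.mem_insert_iff, Set.mem_singleton_iff, not_or] at hane
    have ha2 : a + a = 0 := twoTor a haH
    have hsnd : a.2 = 0 ∨ a.2 = 2 := by
      have h := congrArg Prod.snd ha2
      exact (by decide : ∀ t : ZMod 4, t + t = 0 → t = 0 ∨ t = 2) a.2 h
    have hv : a.1 ≠ 0 := by
      intro h0
      rcases hsnd with h|h
      · exact hane.1 (Prod.ext_iff.mpr ⟨h0, h⟩)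
      · exact hane.2 (Prod.ext_iff.mpr ⟨h0, h⟩)
    have hv0 : ((a.1, 0) : AT) ∈ H := by
      rcases hsnd with h|h
      · have : a = (a.1, (0:ZMod 4)) := Prod.ext_iff.mpr ⟨rfl, h⟩
        exact this ▸ haH
      · have heq : a + twoG = ((a.1, 0) : AT) := by
          refine Prod.ext_iff.mpr ⟨add_zero _, ?_⟩
          show a.2 + 2 = 0
          rw [h]
          decide
        rw [← heq]
        exact H.add_mem haH htwoG
    have hKle : (Kgrp a.1 : Set AT) ⊆ (H : Set AT) := by
      intro x hx
      rcases (mem_Kgrp a.1 x).mp hx with rfl|rfl|rfl|rfl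
      · exact H.zero_mem
      · exact htwoG
      · exact hv0
      · have heq : ((a.1, 0) : AT) + twoG = ((a.1, (2:ZMod 4)) : AT) := by
          refine Prod.ext_iff.mpr ⟨add_zero _, ?_⟩
          show (0:ZMod 4) + 2 = 2
          decide
        rw [← heq]
        exact H.add_mem hv0 htwoG
    have hset : ((Kgrp a.1 : AddSubgroup AT) : Set AT) = (H : Set AT) := by
      refine Set.eq_of_subset_of_ncard_le hKle ?_ (Set.toFinite _)
      have hH4 : (H : Set AT).ncard = 4 := by
        rw [← Nat.card_coe_set_eq]; exact hcard
      have hK4 : ((Kgrp a.1 : AddSubgroup AT) : Set AT).ncard = 4 := by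
        rw [coe_Kgrp, Set.ncard_coe_finset]
        exact Kcard a.1 hv
      omega
    exact ⟨⟨a.1, hv⟩, Subtype.ext (SetLike.coe_set_eq.mp hset)⟩


/-- `A = u(2)^2 ⊕ ⟨-1/4⟩` has exactly 10 cyclic subgroups of order 4
generated by an `x` with `q(x) = -1/4`, exactly 6 cyclic subgroups of order 4
generated by an `x` with `q(x) = 3/4`, and exactly 15 subgroups isomorphic to
`ℤ/2 × ℤ/2` containing `2g`; in total `10 + 6 + 15 = 31`. -/
theorem count_subgroups_of_discriminant_form :
    Nat.card {H : AddSubgroup AT // ∃ x : AT, H = AddSubgroup.closure {x} ∧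
      addOrderOf x = 4 ∧ qT x = ((-1/4 : ℚ) : AddCircle (2 : ℚ))} = 10 ∧
    Nat.card {H : AddSubgroup AT // ∃ x : AT, H = AddSubgroup.closure {x} ∧
      addOrderOf x = 4 ∧ qT x = ((3/4 : ℚ) : AddCircle (2 : ℚ))} = 6 ∧
    Nat.card {H : AddSubgroup AT // Nonempty (H ≃+ (ZMod 2 × ZMod 2)) ∧ twoG ∈ H} = 15 ∧
    10 + 6 + 15 = 31 := by
  refine ⟨?_, ?_, count_klein, rfl⟩
  · exact count_gen (-1/4) (-1) (by congr 1 <;> norm_num) 10 (by decide)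
  · exact count_gen (3/4) 3 (by congr 1 <;> norm_num) 6 (by decide)
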